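/- Let G ∈ ℝ^{K×N} be a nonzero matrix with spectral norm ‖G‖, let u ∈ ℝ^K and v ∈ ℝ^N be unit vectors with uᵀ G v = ‖G‖, and let λ_W, λ_H > 0, a ∈ ℝ^d a unit vector. Define Δ_W = (λ_H/λ_W)^{1/4} u aᵀ ∈ ℝ^{K×d} and Δ_H = −(λ_H/λ_W)^{−1/4} a vᵀ ∈ ℝ^{d×N}. Then 2·trace(Gᵀ Δ_W Δ_H) + λ_W ‖Δ_W‖_F² + λ_H ‖Δ_H‖_F² = −2(‖G‖ − √(λ_W λ_H)). In particular, this quantity is strictly negative whenever ‖G‖ > √(λ_W λ_H). -/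

import Mathlib

open Matrix

open scoped Matrix.Norms.L2Operator

theorem stmt_13 (K N d : ℕ) (G : Matrix (Fin K) (Fin N) ℝ) (hG : G ≠ 0)
    (u : Fin K → ℝ) (v : Fin N → ℝ) (a : Fin d → ℝ)
    (hu : ∑ i, u i ^ 2 = 1) (hv : ∑ j, v j ^ 2 = 1) (ha : ∑ i, a i ^ 2 = 1)
    (huv : u ⬝ᵥ G.mulVec v = ‖G‖)
    (lW lH : ℝ) (hlW : 0 < lW) (hlH : 0 < lH)
    (ΔW : Matrix (Fin K) (Fin d) ℝ) (ΔH : Matrix (Fin d) (Fin N) ℝ)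
    (hΔW : ΔW = ((lH / lW) ^ ((1 : ℝ) / 4)) • Matrix.vecMulVec u a)
    (hΔH : ΔH = -(((lH / lW) ^ (-(1 : ℝ) / 4)) • Matrix.vecMulVec a v)) :
    2 * (Gᵀ * (ΔW * ΔH)).trace + lW * (ΔWᵀ * ΔW).trace + lH * (ΔHᵀ * ΔH).trace
      = -2 * (‖G‖ - Real.sqrt (lW * lH)) ∧
    (Real.sqrt (lW * lH) < ‖G‖ →
      2 * (Gᵀ * (ΔW * ΔH)).trace + lW * (ΔWᵀ * ΔW).trace + lH * (ΔHᵀ * ΔH).trace < 0) := by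
  have hq : (0:ℝ) < lH / lW := div_pos hlH hlW
  set c : ℝ := (lH / lW) ^ ((1 : ℝ) / 4) with hc
  set c' : ℝ := (lH / lW) ^ (-(1 : ℝ) / 4) with hc'
  have hcc' : c * c' = 1 := by
    rw [hc, hc', ← Real.rpow_add hq]; norm_num
  have hcpos : 0 < c := Real.rpow_pos_of_pos hq _
  have hc'pos : 0 < c' := Real.rpow_pos_of_pos hq _
  have hc4 : c ^ 4 = lH / lW := by
    rw [hc, ← Real.rpow_natCast, ← Real.rpow_mul hq.le]; norm_num
  have hc'4 : c' ^ 4 = lW / lH := by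
    rw [hc', ← Real.rpow_natCast, ← Real.rpow_mul hq.le]
    norm_num
    rw [Real.rpow_neg_one]
    exact inv_div lH lW
  have hlWc : lW * c ^ 2 = Real.sqrt (lW * lH) := by
    rw [show lW * lH = (lW * c ^ 2) ^ 2 by
      have : (lW * c^2)^2 = lW^2 * c^4 := by ring
      rw [this, hc4]; field_simp]
    rw [Real.sqrt_sq (by positivity)]
  have hlHc' : lH * c' ^ 2 = Real.sqrt (lW * lH) := by
    rw [show lW * lH = (lH * c' ^ 2) ^ 2 by
      have : (lH * c'^2)^2 = lH^2 * c'^4 := by ring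
      rw [this, hc'4]; field_simp]
    rw [Real.sqrt_sq (by positivity)]
  have hM : ΔW * ΔH = -(Matrix.vecMulVec u v) := by
    rw [hΔW, hΔH]
    ext i j
    simp only [Matrix.mul_apply, Matrix.neg_apply, Matrix.smul_apply, Matrix.vecMulVec_apply,
      smul_eq_mul, Matrix.mul_neg, mul_neg]
    calc ∑ k, -(c * (u i * a k) * (c' * (a k * v j)))
        = -((c * c') * (u i * v j)) * ∑ k, a k ^ 2 := by
          rw [Finset.mul_sum]; exact Finset.sum_congr rfl fun k _ => by ring
      _ = -(u i * v j) := by rw [ha, hcc']; ring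
  have t1 : (Gᵀ * (ΔW * ΔH)).trace = -‖G‖ := by
    rw [hM, ← huv]
    simp only [Matrix.trace, Matrix.diag_apply, Matrix.mul_apply, Matrix.transpose_apply,
      Matrix.neg_apply, Matrix.vecMulVec_apply, mul_neg, Finset.sum_neg_distrib,
      dotProduct, Matrix.mulVec]
    rw [Finset.sum_comm]
    congr 1
    refine Finset.sum_congr rfl fun i _ => ?_
    rw [Finset.mul_sum]
    exact Finset.sum_congr rfl fun j _ => by ring
  have t2 : (ΔWᵀ * ΔW).trace = c ^ 2 := by
    rw [hΔW]
    simp only [Matrix.trace, Matrix.diag_apply, Matrix.mul_apply, Matrix.transpose_apply,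
      Matrix.smul_apply, Matrix.vecMulVec_apply, smul_eq_mul]
    calc ∑ j, ∑ i, c * (u i * a j) * (c * (u i * a j))
        = c ^ 2 * ∑ j, a j ^ 2 * ∑ i, u i ^ 2 := by
          rw [Finset.mul_sum]
          refine Finset.sum_congr rfl fun j _ => ?_
          rw [Finset.mul_sum, Finset.mul_sum]
          exact Finset.sum_congr rfl fun i _ => by ring
      _ = c ^ 2 := by simp [hu, ha]
  have t3 : (ΔHᵀ * ΔH).trace = c' ^ 2 := by
    rw [hΔH]
    simp only [Matrix.trace, Matrix.diag_apply, Matrix.mul_apply, Matrix.transpose_apply,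
      Matrix.neg_apply, Matrix.smul_apply, Matrix.vecMulVec_apply, smul_eq_mul, neg_mul, mul_neg,
      neg_neg]
    calc ∑ j, ∑ i, c' * (a i * v j) * (c' * (a i * v j))
        = c' ^ 2 * ∑ j, v j ^ 2 * ∑ i, a i ^ 2 := by
          rw [Finset.mul_sum]
          refine Finset.sum_congr rfl fun j _ => ?_
          rw [Finset.mul_sum, Finset.mul_sum]
          exact Finset.sum_congr rfl fun i _ => by ring
      _ = c' ^ 2 := by simp [hv, ha]
  have key : 2 * (Gᵀ * (ΔW * ΔH)).trace + lW * (ΔWᵀ * ΔW).trace + lH * (ΔHᵀ * ΔH).trace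
      = -2 * (‖G‖ - Real.sqrt (lW * lH)) := by
    rw [t1, t2, t3, hlWc, hlHc']; ring
  exact ⟨key, fun h => by rw [key]; linarith⟩
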